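/- Let F_0 = 1, F_1 = 2, F_{n+2} = F_{n+1} + F_n be the Fibonacci numbers and let f be the Fibonacci word, the fixed point of the substitution 0 ↦ 01, 1 ↦ 0. For every nonempty finite set A ⊆ ℕ, the sum Σ_{n ∈ A} F_{2n+1} is a position at which f has the letter 0. Consequently, the set f|_0 = {n : f_n = 0} is an IP-set. -/

import Mathlib

/-- The set of occurrences of the finite word `u` in the infinite word `x`. -/
def Occ {A : Type*} (x : ℕ → A) (u : List A) : Set ℕ :=
  {n | u = (List.range u.length).map fun i => x (n + i)}

/-- `u` is a prefix of the infinite word `x`. -/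
def IsPref {A : Type*} (u : List A) (x : ℕ → A) : Prop :=
  u = (List.range u.length).map x

/-- `S` is an IP-set: it contains all finite sums of distinct terms of some
strictly increasing sequence of natural numbers. -/
def IPSet (S : Set ℕ) : Prop :=
  ∃ x : ℕ → ℕ, StrictMono x ∧
    ∀ F : Finset ℕ, F.Nonempty → (∑ n ∈ F, x n) ∈ S

/-- The Fibonacci substitution 0 ↦ 01, 1 ↦ 0. -/
def σfib : ℕ → List ℕ := fun a => if a = 0 then [0, 1] else [0]

/-- Iterates of the Fibonacci substitution on `0`. -/
def Wfib : ℕ → List ℕ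
  | 0 => [0]
  | k + 1 => (Wfib k).flatMap σfib

lemma Wfib_rec (k : ℕ) : Wfib (k + 2) = Wfib (k + 1) ++ Wfib k := by
  induction k with
  | zero => rfl
  | succ k ih =>
    show (Wfib (k + 2)).flatMap σfib = Wfib (k + 2) ++ Wfib (k + 1)
    conv_lhs => rw [ih]
    rw [List.flatMap_append]
    rfl

lemma pref_get {f : ℕ → ℕ} {u : List ℕ} (h : IsPref u f) (i : ℕ) (hi : i < u.length) :
    u[i] = f i := by
  have h2 := List.getElem_of_eq h hi
  simpa using h2

theorem stmt_8 (f : ℕ → ℕ) (hf0 : f 0 = 0)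
    (hfix : ∀ n : ℕ, IsPref (((List.range n).map f).flatMap σfib) f)
    (F : ℕ → ℕ) (hF0 : F 0 = 1) (hF1 : F 1 = 2)
    (hF : ∀ n, F (n + 2) = F (n + 1) + F n) :
    (∀ A : Finset ℕ, A.Nonempty → f (∑ n ∈ A, F (2 * n + 1)) = 0) ∧
      IPSet {n | f n = 0} := by
  -- prefixes
  have Wpref : ∀ k, IsPref (Wfib k) f := by
    intro k
    induction k with
    | zero => simp [IsPref, Wfib, List.range_succ, hf0]
    | succ k ih =>
      have h1 : Wfib (k + 1) = ((List.range (Wfib k).length).map f).flatMap σfib := by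
        show (Wfib k).flatMap σfib = _
        rw [← ih]
      rw [h1]
      exact hfix _
  -- lengths
  have Wlen : ∀ k, (Wfib k).length = F k := by
    have h : ∀ k, (Wfib k).length = F k ∧ (Wfib (k + 1)).length = F (k + 1) := by
      intro k
      induction k with
      | zero =>
        constructor
        · simp [Wfib, hF0]
        · show ([0].flatMap σfib).length = F 1
          simp [σfib, hF1]
      | succ k ih =>
        refine ⟨ih.2, ?_⟩
        rw [Wfib_rec, List.length_append, hF, ih.1, ih.2]
    exact fun k => (h k).1
  -- positivity of F
  have Fpos : ∀ n, 0 < F n := by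
    intro n
    induction n using Nat.strong_induction_on with
    | _ n ih =>
      match n with
      | 0 => omega
      | 1 => omega
      | (k + 2) =>
        have h1 := ih k (by omega)
        rw [hF]; omega
  -- key self-similarity
  have key : ∀ n m, m < F n → f (F (n + 1) + m) = f m := by
    intro n m hm
    have hi : F (n + 1) + m < (Wfib (n + 2)).length := by
      rw [Wlen, hF]; omega
    have him : m < (Wfib n).length := by rw [Wlen]; exact hm
    have e1 : (Wfib (n + 2))[F (n + 1) + m] = f (F (n + 1) + m) :=
      pref_get (Wpref (n + 2)) _ hi
    have e2 : (Wfib n)[m] = f m := pref_get (Wpref n) _ him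
    rw [← e1, ← e2]
    have h2 := List.getElem_of_eq (Wfib_rec n) hi
    rw [h2]
    rw [List.getElem_append_right (by rw [Wlen]; omega)]
    congr 1
    rw [Wlen]
    omega
  -- sum of odd-indexed Fibonacci numbers
  have sum_odd : ∀ k, (∑ j ∈ Finset.range k, F (2 * j + 1)) + 1 = F (2 * k) := by
    intro k
    induction k with
    | zero => simpa using hF0.symm
    | succ k ih =>
      rw [Finset.sum_range_succ]
      have e : 2 * (k + 1) = 2 * k + 2 := by ring
      rw [e, hF]
      omega
  -- part 1
  have part1 : ∀ A : Finset ℕ, A.Nonempty → f (∑ n ∈ A, F (2 * n + 1)) = 0 := by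
    intro A
    induction A using Finset.induction_on_max with
    | empty => intro h; exact absurd rfl h.ne_empty
    | insert a s hs ih =>
      intro _
      rw [Finset.sum_insert (fun h => lt_irrefl a (hs a h))]
      have hbound : (∑ n ∈ s, F (2 * n + 1)) < F (2 * a) := by
        have hsub : s ⊆ Finset.range a := fun x hx => Finset.mem_range.2 (hs x hx)
        have hle : (∑ n ∈ s, F (2 * n + 1)) ≤ ∑ j ∈ Finset.range a, F (2 * j + 1) :=
          Finset.sum_le_sum_of_subset hsub
        have := sum_odd a
        omega
      rw [key (2 * a) _ hbound]
      rcases s.eq_empty_or_nonempty with h | h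
      · simp [h, hf0]
      · exact ih h
  refine ⟨part1, ?_⟩
  -- IP-set
  have Fmono : StrictMono F := by
    apply strictMono_nat_of_lt_succ
    intro n
    match n with
    | 0 => show F 0 < F 1; omega
    | (k + 1) => rw [hF]; have := Fpos k; omega
  refine ⟨fun n => F (2 * n + 1), ?_, ?_⟩
  · intro a b hab
    exact Fmono (by omega)
  · intro A hA
    exact part1 A hA
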